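/- With the notation above, if s(r) < ∞ then finiteness of v_X(r) is equivalent to local integrability of (s(r) - s)·f/(s'σ²) at r⁻, where f = b². In particular, if (s(r) - s)f/(s'σ²) ∈ L¹_loc(r⁻) and s(r) < ∞, then v_X(r) < ∞; and if (s(r) - s)f/(s'σ²) ∉ L¹_loc(r⁻), then v_X(r) = ∞. -/

import Mathlib

open MeasureTheory Set Filter
open scoped ENNReal

/-- With `f = b² : J → (0, ∞]` and `s(r) < ∞` (the supremum of the scale function
equals the real number `sr`), finiteness of `v_X(r)` (the monotone limit of
`v_X x = ∫_c^x (s x - s y)·2 f(y)/(s'(y)σ²(y)) dy`, realized as a supremum in `[0,∞]`)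
is equivalent to local integrability of `(s(r) - s)·f/(s'σ²)` at `r⁻`.  In particular, if
`(s(r) - s)f/(s'σ²) ∈ L¹_loc(r⁻)` then `v_X(r) < ∞`, and if
`(s(r) - s)f/(s'σ²) ∉ L¹_loc(r⁻)` then `v_X(r) = ∞`. -/
theorem stmt8 (ℓ r : EReal) (hlr : ℓ < r) (μ σ : ℝ → ℝ) (f : ℝ → ℝ≥0∞) (c : ℝ)
    (hc : ℓ < (c : EReal) ∧ (c : EReal) < r)
    (hμ : Measurable μ) (hσ : Measurable σ) (hf : Measurable f)
    (hσne : ∀ x : ℝ, ℓ < (x : EReal) → (x : EReal) < r → σ x ≠ 0)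
    (hfpos : ∀ x : ℝ, ℓ < (x : EReal) → (x : EReal) < r → 0 < f x)
    (hloc : ∀ K : Set ℝ, K ⊆ {x : ℝ | ℓ < (x : EReal) ∧ (x : EReal) < r} → IsCompact K →
      IntegrableOn (fun x => 1 / (σ x)^2) K volume ∧
      IntegrableOn (fun x => μ x / (σ x)^2) K volume ∧
      (∫⁻ x in K, f x / ENNReal.ofReal ((σ x)^2) ∂volume) < ⊤)
    (ρ s : ℝ → ℝ) (sr : ℝ) (vXf : ℝ → ℝ≥0∞) (vXr : ℝ≥0∞)
    (hρ : ∀ y : ℝ, ρ y = Real.exp (-∫ u in c..y, 2 * μ u / (σ u)^2))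
    (hs : ∀ x : ℝ, s x = ∫ y in c..x, ρ y)
    -- `s(r) < ∞`: the left limit of `s` at `r`, i.e. the supremum of `s` over `J`,
    -- is the (finite) real number `sr`.
    (hsr : (⨆ x : {x : ℝ // ℓ < (x : EReal) ∧ (x : EReal) < r}, ((s (x : ℝ) : ℝ) : EReal))
      = (sr : EReal))
    (hvXf : ∀ x : ℝ, vXf x
      = ∫⁻ y in Set.Ioc c x, ENNReal.ofReal ((s x - s y) * 2 / (ρ y * (σ y)^2)) * f y)
    (hvXr : vXr = ⨆ x : {x : ℝ // (ℓ < (x : EReal) ∧ (x : EReal) < r) ∧ c ≤ x}, vXf (x : ℝ)) :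
    (vXr < ⊤ ↔ ∃ x₀ : ℝ, (ℓ < (x₀ : EReal) ∧ (x₀ : EReal) < r) ∧
        (∫⁻ y in {y : ℝ | x₀ < y ∧ (y : EReal) < r},
          ENNReal.ofReal ((sr - s y) / (ρ y * (σ y)^2)) * f y ∂volume) < ⊤)
    ∧ ((∃ x₀ : ℝ, (ℓ < (x₀ : EReal) ∧ (x₀ : EReal) < r) ∧
        (∫⁻ y in {y : ℝ | x₀ < y ∧ (y : EReal) < r},
          ENNReal.ofReal ((sr - s y) / (ρ y * (σ y)^2)) * f y ∂volume) < ⊤) → vXr < ⊤)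
    ∧ (¬ (∃ x₀ : ℝ, (ℓ < (x₀ : EReal) ∧ (x₀ : EReal) < r) ∧
        (∫⁻ y in {y : ℝ | x₀ < y ∧ (y : EReal) < r},
          ENNReal.ofReal ((sr - s y) / (ρ y * (σ y)^2)) * f y ∂volume) < ⊤) → vXr = ⊤) := by
  classical
  set J : Set ℝ := {x : ℝ | ℓ < (x : EReal) ∧ (x : EReal) < r} with hJdef
  have hcJ : c ∈ J := hc
  -- J is order-convex
  have hmemJ : ∀ {a b z : ℝ}, a ∈ J → b ∈ J → z ∈ Set.uIcc a b → z ∈ J := by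
    intro a b z ha hb hz
    rw [Set.mem_uIcc] at hz
    rcases hz with ⟨h1, h2⟩ | ⟨h1, h2⟩
    · exact ⟨lt_of_lt_of_le ha.1 (EReal.coe_le_coe_iff.2 h1),
        lt_of_le_of_lt (EReal.coe_le_coe_iff.2 h2) hb.2⟩
    · exact ⟨lt_of_lt_of_le hb.1 (EReal.coe_le_coe_iff.2 h1),
        lt_of_le_of_lt (EReal.coe_le_coe_iff.2 h2) ha.2⟩
  have hmaxJ : ∀ {a b : ℝ}, a ∈ J → b ∈ J → max a b ∈ J := by
    intro a b ha hb
    rcases max_cases a b with ⟨h, _⟩ | ⟨h, _⟩ <;> rw [h] <;> assumption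
  have hminJ : ∀ {a b : ℝ}, a ∈ J → b ∈ J → min a b ∈ J := by
    intro a b ha hb
    rcases min_cases a b with ⟨h, _⟩ | ⟨h, _⟩ <;> rw [h] <;> assumption
  -- J is open
  have hJo : IsOpen J := by
    have : J = (fun x : ℝ => (x : EReal)) ⁻¹' (Set.Ioo ℓ r) := by
      ext x; simp [hJdef, Set.mem_Ioo]
    rw [this]
    exact isOpen_Ioo.preimage continuous_coe_real_ereal
  have hρpos : ∀ y, 0 < ρ y := fun y => (hρ y) ▸ Real.exp_pos _
  -- integrability of the drift quotient on subintervals of J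
  have hgint : ∀ a b, a ∈ J → b ∈ J →
      IntervalIntegrable (fun u => 2 * μ u / (σ u) ^ 2) volume a b := by
    intro a b ha hb
    have hK : Set.uIcc a b ⊆ J := fun z hz => hmemJ ha hb hz
    have h1 := (hloc (Set.uIcc a b) hK isCompact_uIcc).2.1
    have h2 : IntegrableOn (fun u => 2 * (μ u / (σ u) ^ 2)) (Set.uIcc a b) volume :=
      h1.const_mul 2
    have h3 : IntegrableOn (fun u => 2 * μ u / (σ u) ^ 2) (Set.uIcc a b) volume := by
      simpa [mul_div_assoc] using h2
    exact h3.intervalIntegrable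
  -- continuity of primitives on J
  have hprimcont : ∀ (g : ℝ → ℝ), (∀ a b, a ∈ J → b ∈ J → IntervalIntegrable g volume a b) →
      ContinuousOn (fun y => ∫ u in c..y, g u) J := by
    intro g hg
    intro a ha
    apply ContinuousAt.continuousWithinAt
    obtain ⟨ε, hε, hball⟩ := Metric.isOpen_iff.1 hJo a ha
    have hIcc : Set.Icc (a - ε / 2) (a + ε / 2) ⊆ J := by
      intro z hz
      apply hball
      rw [Metric.mem_ball, Real.dist_eq, abs_sub_lt_iff]
      constructor <;> [linarith [hz.2]; linarith [hz.1]]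
    have h1 : a - ε / 2 ∈ J := hIcc ⟨le_rfl, by linarith⟩
    have h2 : a + ε / 2 ∈ J := hIcc ⟨by linarith, le_rfl⟩
    have hmin : min c (a - ε / 2) ∈ J := hminJ hcJ h1
    have hmax : max c (a + ε / 2) ∈ J := hmaxJ hcJ h2
    have hint : IntervalIntegrable g volume (min c (a - ε / 2)) (max c (a + ε / 2)) :=
      hg _ _ hmin hmax
    have hcw : ContinuousWithinAt (fun y => ∫ u in c..y, g u)
        (Set.Icc (a - ε / 2) (a + ε / 2)) a :=
      intervalIntegral.continuousWithinAt_primitive (measure_singleton a) hint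
    exact hcw.continuousAt (Icc_mem_nhds (by linarith) (by linarith))
  have hρcont : ContinuousOn ρ J := by
    have hF : ContinuousOn (fun y => ∫ u in c..y, 2 * μ u / (σ u) ^ 2) J :=
      hprimcont _ hgint
    have : ContinuousOn (fun y => Real.exp (-∫ u in c..y, 2 * μ u / (σ u) ^ 2)) J :=
      Real.continuous_exp.comp_continuousOn hF.neg
    have heq : ρ = fun y => Real.exp (-∫ u in c..y, 2 * μ u / (σ u) ^ 2) := funext hρ
    rw [heq]; exact this
  have hρint : ∀ a b, a ∈ J → b ∈ J → IntervalIntegrable ρ volume a b := by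
    intro a b ha hb
    exact (hρcont.mono (fun z hz => hmemJ ha hb hz)).intervalIntegrable
  have hscont : ContinuousOn s J := by
    have h1 : ContinuousOn (fun y => ∫ u in c..y, ρ u) J := hprimcont _ hρint
    have heq : s = fun y => ∫ u in c..y, ρ u := funext hs
    rw [heq]; exact h1
  -- monotonicity of s on J
  have hsadd : ∀ a ∈ J, ∀ b ∈ J, s b = s a + ∫ y in a..b, ρ y := by
    intro a ha b hb
    rw [hs a, hs b,
      intervalIntegral.integral_add_adjacent_intervals (hρint c a hcJ ha) (hρint a b ha hb)]
  have hsmono : ∀ a ∈ J, ∀ b ∈ J, a ≤ b → s a ≤ s b := by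
    intro a ha b hb hab
    rw [hsadd a ha b hb]
    have : 0 ≤ ∫ y in a..b, ρ y :=
      intervalIntegral.integral_nonneg hab (fun u _ => (hρpos u).le)
    linarith
  have hsstrict : ∀ a ∈ J, ∀ b ∈ J, a < b → s a < s b := by
    intro a ha b hb hab
    have hIcc : Set.Icc a b ⊆ J := by
      intro z hz
      exact hmemJ ha hb (by rw [Set.uIcc_of_le hab.le]; exact hz)
    obtain ⟨zm, hzm, hmin⟩ := isCompact_Icc.exists_isMinOn ⟨a, Set.left_mem_Icc.2 hab.le⟩
      (hρcont.mono hIcc)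
    have hm : 0 < ρ zm := hρpos zm
    have hint : (b - a) * ρ zm ≤ ∫ y in a..b, ρ y := by
      have := intervalIntegral.integral_mono_on hab.le
        (intervalIntegrable_const (c := ρ zm)) (hρint a b ha hb)
        (fun u hu => hmin hu)
      simpa [smul_eq_mul, mul_comm] using this
    have : 0 < ∫ y in a..b, ρ y := lt_of_lt_of_le (by nlinarith) hint
    rw [hsadd a ha b hb]; linarith
  -- s ≤ sr on J, and sr is approached
  have hsle : ∀ x ∈ J, s x ≤ sr := by
    intro x hx
    have h := le_iSup (fun p : {x : ℝ // ℓ < (x : EReal) ∧ (x : EReal) < r} =>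
      ((s (p : ℝ) : ℝ) : EReal)) ⟨x, hx⟩
    rw [hsr] at h
    exact_mod_cast h
  have hsbig : ∀ ε : ℝ, 0 < ε → ∃ x, x ∈ J ∧ sr - ε < s x := by
    intro ε hε
    by_contra h
    push_neg at h
    have h2 : (⨆ p : {x : ℝ // ℓ < (x : EReal) ∧ (x : EReal) < r},
        ((s (p : ℝ) : ℝ) : EReal)) ≤ ((sr - ε : ℝ) : EReal) := by
      apply iSup_le
      rintro ⟨x, hx⟩
      exact_mod_cast h x hx
    rw [hsr] at h2
    have := EReal.coe_le_coe_iff.1 h2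
    linarith
  -- a monotone sequence xseq n ∈ J with c ≤ xseq n, s (xseq n) → sr, exhausting (c, r)
  have hzex : ∀ n : ℕ, ∃ x, x ∈ J ∧ sr - 1 / ((n : ℝ) + 1) < s x :=
    fun n => hsbig _ (by positivity)
  choose z hzJ hzs using hzex
  have hne : ∀ n : ℕ, (Finset.range (n + 1)).Nonempty :=
    fun n => Finset.nonempty_range_iff.2 (Nat.succ_ne_zero n)
  set xseq : ℕ → ℝ := fun n => max c ((Finset.range (n + 1)).sup' (hne n) z) with hxdef
  have hxJ : ∀ n, xseq n ∈ J := by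
    intro n
    obtain ⟨k, _, hkeq⟩ := Finset.exists_mem_eq_sup' (hne n) z
    rw [hxdef]
    simp only
    rw [hkeq]
    exact hmaxJ hcJ (hzJ k)
  have hcx : ∀ n, c ≤ xseq n := fun n => le_max_left _ _
  have hzx : ∀ n, z n ≤ xseq n := by
    intro n
    refine le_trans (Finset.le_sup' z ?_) (le_max_right _ _)
    exact Finset.self_mem_range_succ n
  have hxmono : Monotone xseq := by
    intro n m hnm
    apply max_le_max le_rfl
    apply Finset.sup'_le
    intro b hb
    exact Finset.le_sup' z (Finset.mem_range.2
      (lt_of_lt_of_le (Finset.mem_range.1 hb) (by omega)))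
  have hsxn : ∀ n : ℕ, sr - 1 / ((n : ℝ) + 1) < s (xseq n) :=
    fun n => lt_of_lt_of_le (hzs n) (hsmono _ (hzJ n) _ (hxJ n) (hzx n))
  have hstend : Tendsto (fun n : ℕ => s (xseq n)) atTop (nhds sr) := by
    have h1 : Tendsto (fun n : ℕ => sr - 1 / ((n : ℝ) + 1)) atTop (nhds sr) := by
      have h0 := tendsto_one_div_add_atTop_nhds_zero_nat (𝕜 := ℝ)
      have := tendsto_const_nhds (x := sr) (f := atTop (α := ℕ)) |>.sub h0
      simpa using this
    exact tendsto_of_tendsto_of_tendsto_of_le_of_le h1 tendsto_const_nhds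
      (fun n => (hsxn n).le) (fun n => hsle _ (hxJ n))
  have hcover : ∀ y : ℝ, c < y → (y : EReal) < r → ∃ n, y ≤ xseq n := by
    intro y hy1 hy2
    have hyJ : y ∈ J := ⟨lt_trans hc.1 (EReal.coe_lt_coe_iff.2 hy1), hy2⟩
    obtain ⟨q, hq1, hq2⟩ := EReal.lt_iff_exists_real_btwn.1 hy2
    have hqJ : q ∈ J := ⟨lt_trans hyJ.1 hq1, hq2⟩
    have hyq : y < q := EReal.coe_lt_coe_iff.1 hq1
    have hsy : s y < sr := lt_of_lt_of_le (hsstrict y hyJ q hqJ hyq) (hsle q hqJ)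
    obtain ⟨n, hn⟩ := exists_nat_one_div_lt (sub_pos.2 hsy)
    refine ⟨n, ?_⟩
    by_contra hcon
    push_neg at hcon
    have := hsmono _ (hxJ n) _ hyJ hcon.le
    have := hsxn n
    linarith
  -- basic positivity on J
  have hbpos : ∀ y ∈ J, 0 < ρ y * (σ y) ^ 2 := by
    intro y hy
    exact mul_pos (hρpos y) (pow_two_pos_of_ne_zero (hσne y hy.1 hy.2))
  -- key sets
  set S : Set ℝ := {y : ℝ | c < y ∧ (y : EReal) < r} with hSdef
  have hSm : MeasurableSet S := by
    have : S = Set.Ioi c ∩ (fun y : ℝ => (y : EReal)) ⁻¹' (Set.Iio r) := by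
      ext y; simp [hSdef]
    rw [this]
    exact measurableSet_Ioi.inter (measurable_coe_real_ereal measurableSet_Iio)
  have hSJ : S ⊆ J := fun y hy => ⟨lt_trans hc.1 (EReal.coe_lt_coe_iff.2 hy.1), hy.2⟩
  have htailm : ∀ x₀ : ℝ, MeasurableSet {y : ℝ | x₀ < y ∧ (y : EReal) < r} := by
    intro x₀
    have : {y : ℝ | x₀ < y ∧ (y : EReal) < r}
        = Set.Ioi x₀ ∩ (fun y : ℝ => (y : EReal)) ⁻¹' (Set.Iio r) := by
      ext y; simp
    rw [this]
    exact measurableSet_Ioi.inter (measurable_coe_real_ereal measurableSet_Iio)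
  -- integrands
  set G2 : ℝ → ℝ≥0∞ :=
    fun y => ENNReal.ofReal ((sr - s y) * 2 / (ρ y * (σ y) ^ 2)) * f y with hG2def
  set G1 : ℝ → ℝ≥0∞ :=
    fun y => ENNReal.ofReal ((sr - s y) / (ρ y * (σ y) ^ 2)) * f y with hG1def
  have hG21 : ∀ y ∈ J, G2 y = 2 * G1 y := by
    intro y hy
    rw [hG2def, hG1def]
    simp only
    have : (sr - s y) * 2 / (ρ y * (σ y) ^ 2) = 2 * ((sr - s y) / (ρ y * (σ y) ^ 2)) := by ring
    rw [this, ENNReal.ofReal_mul (by norm_num), mul_assoc]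
    norm_num
  -- measurability helpers
  have hsa : AEMeasurable s (volume.restrict S) :=
    ((hscont.aemeasurable hJo.measurableSet).mono_measure (Measure.restrict_mono hSJ le_rfl))
  have hρa : AEMeasurable ρ (volume.restrict S) :=
    ((hρcont.aemeasurable hJo.measurableSet).mono_measure (Measure.restrict_mono hSJ le_rfl))
  have hGna : ∀ t : ℝ, AEMeasurable
      (fun y => ENNReal.ofReal ((t - s y) * 2 / (ρ y * (σ y) ^ 2)) * f y)
      (volume.restrict S) := by
    intro t
    apply AEMeasurable.mul _ hf.aemeasurable
    apply ENNReal.measurable_ofReal.comp_aemeasurable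
    exact (((aemeasurable_const (b := t)).sub hsa).mul_const 2).div
      (hρa.mul ((hσ.pow_const 2).aemeasurable))
  have hdivle : ∀ {A B b : ℝ}, 0 < b → A ≤ B → A * 2 / b ≤ B * 2 / b := by
    intro A B b hb hAB
    gcongr
  -- CLAIM A : vXr < ⊤ → tail integral at c is finite
  have claimA : vXr < ⊤ → (∫⁻ y in S, G1 y ∂volume) < ⊤ := by
    intro hfin
    set h : ℕ → ℝ → ℝ≥0∞ := fun n y => (Set.Ioc c (xseq n)).indicator
      (fun y => ENNReal.ofReal ((s (xseq n) - s y) * 2 / (ρ y * (σ y) ^ 2)) * f y) y with hhdef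
    have hIocS : ∀ n, Set.Ioc c (xseq n) ⊆ S := by
      intro n y hy
      exact ⟨hy.1, lt_of_le_of_lt (EReal.coe_le_coe_iff.2 hy.2) (hxJ n).2⟩
    have hptwise : ∀ y ∈ S, G2 y = ⨆ n, h n y := by
      intro y hyS
      have hyJ : y ∈ J := hSJ hyS
      have hb := hbpos y hyJ
      obtain ⟨N, hN⟩ := hcover y hyS.1 hyS.2
      set a : ℕ → ℝ≥0∞ :=
        fun n => ENNReal.ofReal ((s (xseq n) - s y) * 2 / (ρ y * (σ y) ^ 2)) with hadef
      have hamono : Monotone a := by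
        intro n m hnm
        apply ENNReal.ofReal_le_ofReal
        have := hsmono _ (hxJ n) _ (hxJ m) (hxmono hnm)
        exact hdivle hb (by linarith)
      have hfy : ∀ n, y ∈ Set.Ioc c (xseq n) → h n y = a n * f y := by
        intro n hy
        rw [hhdef]
        simp only
        rw [Set.indicator_of_mem hy]
      have hha : ∀ n, h n y ≤ a n * f y := by
        intro n
        rw [hhdef]
        simp only
        by_cases hy : y ∈ Set.Ioc c (xseq n)
        · rw [Set.indicator_of_mem hy]
        · rw [Set.indicator_of_notMem hy]; exact zero_le
      have hsup_a : (⨆ n, a n)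
          = ENNReal.ofReal ((sr - s y) * 2 / (ρ y * (σ y) ^ 2)) := by
        have htd : Tendsto a atTop
            (nhds (ENNReal.ofReal ((sr - s y) * 2 / (ρ y * (σ y) ^ 2)))) := by
          apply ENNReal.tendsto_ofReal
          have h1 : Tendsto (fun n => s (xseq n) - s y) atTop (nhds (sr - s y)) :=
            hstend.sub tendsto_const_nhds
          exact (h1.mul_const 2).div_const _
        exact tendsto_nhds_unique (tendsto_atTop_iSup hamono) htd
      apply le_antisymm
      · rw [hG2def]
        simp only
        rw [← hsup_a, ENNReal.iSup_mul]
        apply iSup_le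
        intro n
        have h2 : y ∈ Set.Ioc c (xseq (max n N)) :=
          ⟨hyS.1, le_trans hN (hxmono (le_max_right n N))⟩
        calc a n * f y ≤ a (max n N) * f y :=
              mul_le_mul_left (hamono (le_max_left n N)) _
          _ = h (max n N) y := (hfy _ h2).symm
          _ ≤ ⨆ m, h m y := le_iSup (fun m => h m y) (max n N)
      · apply iSup_le
        intro n
        refine le_trans (hha n) ?_
        rw [hG2def]
        simp only
        apply mul_le_mul_left
        apply ENNReal.ofReal_le_ofReal
        have := hsle _ (hxJ n)
        exact hdivle hb (by linarith)
    have hcongr : (∫⁻ y in S, G1 y ∂volume) ≤ ∫⁻ y in S, G2 y ∂volume := by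
      apply setLIntegral_mono' hSm
      intro y hyS
      rw [hG21 y (hSJ hyS)]
      calc G1 y = 1 * G1 y := (one_mul _).symm
        _ ≤ 2 * G1 y := mul_le_mul_left (by norm_num) _
    have heq2 : (∫⁻ y in S, G2 y ∂volume) = ⨆ n, ∫⁻ y in S, h n y ∂volume := by
      rw [setLIntegral_congr_fun_ae hSm (ae_of_all _ hptwise)]
      apply lintegral_iSup'
      · intro n
        exact (hGna (s (xseq n))).indicator measurableSet_Ioc
      · apply ae_of_all
        intro y
        apply monotone_nat_of_le_succ
        intro n
        rw [hhdef]
        simp only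
        by_cases hy : y ∈ Set.Ioc c (xseq n)
        · rw [Set.indicator_of_mem hy,
            Set.indicator_of_mem (Set.Ioc_subset_Ioc le_rfl (hxmono (Nat.le_succ n)) hy)]
          apply mul_le_mul_left
          apply ENNReal.ofReal_le_ofReal
          have hyJ : y ∈ J := hSJ (hIocS n hy)
          have := hsmono _ (hxJ n) _ (hxJ (n + 1)) (hxmono (Nat.le_succ n))
          exact hdivle (hbpos y hyJ) (by linarith)
        · rw [Set.indicator_of_notMem hy]; exact zero_le
    have hle : ∀ n, (∫⁻ y in S, h n y ∂volume) ≤ vXr := by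
      intro n
      have heq : (∫⁻ y in S, h n y ∂volume) = vXf (xseq n) := by
        rw [hhdef]
        simp only
        rw [lintegral_indicator measurableSet_Ioc,
          Measure.restrict_restrict measurableSet_Ioc,
          Set.inter_eq_self_of_subset_left (hIocS n)]
        exact (hvXf (xseq n)).symm
      rw [heq, hvXr]
      exact le_iSup (fun p : {x : ℝ // (ℓ < (x : EReal) ∧ (x : EReal) < r) ∧ c ≤ x} =>
        vXf (p : ℝ)) ⟨xseq n, hxJ n, hcx n⟩
    calc (∫⁻ y in S, G1 y ∂volume) ≤ ∫⁻ y in S, G2 y ∂volume := hcongr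
      _ = ⨆ n, ∫⁻ y in S, h n y ∂volume := heq2
      _ ≤ vXr := iSup_le hle
      _ < ⊤ := hfin
  -- CLAIM B : finiteness of a tail integral implies vXr < ⊤
  have claimB : (∃ x₀ : ℝ, (ℓ < (x₀ : EReal) ∧ (x₀ : EReal) < r) ∧
      (∫⁻ y in {y : ℝ | x₀ < y ∧ (y : EReal) < r}, G1 y ∂volume) < ⊤) → vXr < ⊤ := by
    rintro ⟨x₀, hx₀J, hT⟩
    set x₁ := max x₀ c with hx₁def
    have hx₁J : x₁ ∈ J := hmaxJ hx₀J hcJ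
    have hcx₁ : c ≤ x₁ := le_max_right _ _
    set tail := {y : ℝ | x₁ < y ∧ (y : EReal) < r} with htaildef
    have htsub : tail ⊆ {y : ℝ | x₀ < y ∧ (y : EReal) < r} := by
      intro y hy
      exact ⟨lt_of_le_of_lt (le_max_left _ _) hy.1, hy.2⟩
    have htailJ : tail ⊆ J := by
      intro y hy
      exact ⟨lt_trans hx₁J.1 (EReal.coe_lt_coe_iff.2 hy.1), hy.2⟩
    have hT1 : (∫⁻ y in tail, G1 y ∂volume) < ⊤ :=
      lt_of_le_of_lt (lintegral_mono_set htsub) hT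
    have hT2 : (∫⁻ y in tail, G2 y ∂volume) < ⊤ := by
      have heq : (∫⁻ y in tail, G2 y ∂volume) = ∫⁻ y in tail, 2 * G1 y ∂volume :=
        setLIntegral_congr_fun_ae (htailm x₁) (ae_of_all _ (fun y hy => hG21 y (htailJ hy)))
      rw [heq, lintegral_const_mul' 2 _ (by norm_num)]
      exact ENNReal.mul_lt_top (by norm_num) hT1
    have hKJ : Set.Icc c x₁ ⊆ J := by
      intro z hz
      exact hmemJ hcJ hx₁J (by rw [Set.uIcc_of_le hcx₁]; exact hz)
    obtain ⟨zm, hzm, hmin⟩ := isCompact_Icc.exists_isMinOn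
      ⟨c, Set.left_mem_Icc.2 hcx₁⟩ (hρcont.mono hKJ)
    have hm : 0 < ρ zm := hρpos zm
    set M := sr - s c with hMdef
    have hM : 0 ≤ M := by
      have := hsle c hcJ
      rw [hMdef]; linarith
    have hbound : ∀ y ∈ Set.Ioc c x₁,
        G2 y ≤ ENNReal.ofReal (2 * M / ρ zm) * (f y / ENNReal.ofReal ((σ y) ^ 2)) := by
      intro y hy
      have hyJ : y ∈ J := hKJ (Set.Ioc_subset_Icc_self hy)
      have hσ2 : 0 < (σ y) ^ 2 := pow_two_pos_of_ne_zero (hσne y hyJ.1 hyJ.2)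
      have hρy : ρ zm ≤ ρ y := hmin (Set.Ioc_subset_Icc_self hy)
      have hsy : s c ≤ s y := hsmono c hcJ y hyJ hy.1.le
      have hnum : sr - s y ≤ M := by rw [hMdef]; linarith
      have hsrle : 0 ≤ sr - s y := by
        have := hsle y hyJ
        linarith
      have key : (sr - s y) * 2 / (ρ y * (σ y) ^ 2) ≤ (2 * M / ρ zm) * (1 / (σ y) ^ 2) := by
        rw [← div_div, mul_one_div]
        apply (div_le_div_iff_of_pos_right hσ2).2
        apply div_le_div₀ (by linarith) (by linarith) hm hρy
      calc G2 y = ENNReal.ofReal ((sr - s y) * 2 / (ρ y * (σ y) ^ 2)) * f y := rfl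
        _ ≤ ENNReal.ofReal ((2 * M / ρ zm) * (1 / (σ y) ^ 2)) * f y :=
            mul_le_mul_left (ENNReal.ofReal_le_ofReal key) _
        _ = ENNReal.ofReal (2 * M / ρ zm) * ENNReal.ofReal (1 / (σ y) ^ 2) * f y := by
            rw [ENNReal.ofReal_mul (div_nonneg (by linarith) hm.le)]
        _ = ENNReal.ofReal (2 * M / ρ zm) * (f y / ENNReal.ofReal ((σ y) ^ 2)) := by
            rw [mul_assoc]
            congr 1
            rw [one_div, ENNReal.ofReal_inv_of_pos hσ2, ← ENNReal.div_eq_inv_mul]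
    have hA : (∫⁻ y in Set.Ioc c x₁, G2 y ∂volume) < ⊤ := by
      calc ∫⁻ y in Set.Ioc c x₁, G2 y ∂volume
          ≤ ∫⁻ y in Set.Ioc c x₁,
              ENNReal.ofReal (2 * M / ρ zm) * (f y / ENNReal.ofReal ((σ y) ^ 2)) ∂volume :=
            setLIntegral_mono' measurableSet_Ioc hbound
        _ = ENNReal.ofReal (2 * M / ρ zm)
              * ∫⁻ y in Set.Ioc c x₁, f y / ENNReal.ofReal ((σ y) ^ 2) ∂volume :=
            lintegral_const_mul' _ _ ENNReal.ofReal_ne_top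
        _ ≤ ENNReal.ofReal (2 * M / ρ zm)
              * ∫⁻ y in Set.Icc c x₁, f y / ENNReal.ofReal ((σ y) ^ 2) ∂volume :=
            mul_le_mul_right (lintegral_mono_set Set.Ioc_subset_Icc_self) _
        _ < ⊤ := ENNReal.mul_lt_top ENNReal.ofReal_lt_top ((hloc _ hKJ isCompact_Icc).2.2)
    have hsub : ∀ xx : ℝ, xx ∈ J → Set.Ioc c xx ⊆ Set.Ioc c x₁ ∪ tail := by
      intro xx hxx y hy
      by_cases h1 : y ≤ x₁
      · exact Or.inl ⟨hy.1, h1⟩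
      · exact Or.inr ⟨not_le.1 h1, lt_of_le_of_lt (EReal.coe_le_coe_iff.2 hy.2) hxx.2⟩
    have hbd : ∀ xx : ℝ, xx ∈ J → c ≤ xx →
        vXf xx ≤ (∫⁻ y in Set.Ioc c x₁, G2 y ∂volume) + ∫⁻ y in tail, G2 y ∂volume := by
      intro xx hxx hcxx
      rw [hvXf]
      calc (∫⁻ y in Set.Ioc c xx,
              ENNReal.ofReal ((s xx - s y) * 2 / (ρ y * (σ y) ^ 2)) * f y ∂volume)
          ≤ ∫⁻ y in Set.Ioc c xx, G2 y ∂volume := by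
            apply setLIntegral_mono' measurableSet_Ioc
            intro y hy
            have hyJ : y ∈ J := hmemJ hcJ hxx
              (by rw [Set.uIcc_of_le hcxx]; exact Set.Ioc_subset_Icc_self hy)
            apply mul_le_mul_left
            apply ENNReal.ofReal_le_ofReal
            have := hsle xx hxx
            exact hdivle (hbpos y hyJ) (by linarith)
        _ ≤ ∫⁻ y in Set.Ioc c x₁ ∪ tail, G2 y ∂volume := lintegral_mono_set (hsub xx hxx)
        _ ≤ _ := lintegral_union_le _ _ _
    rw [hvXr]
    refine lt_of_le_of_lt (iSup_le ?_) (ENNReal.add_lt_top.2 ⟨hA, hT2⟩)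
    rintro ⟨xx, hxxJ, hcxx⟩
    exact hbd xx hxxJ hcxx
  -- assemble
  have hmain : vXr < ⊤ ↔ ∃ x₀ : ℝ, (ℓ < (x₀ : EReal) ∧ (x₀ : EReal) < r) ∧
      (∫⁻ y in {y : ℝ | x₀ < y ∧ (y : EReal) < r}, G1 y ∂volume) < ⊤ := by
    constructor
    · intro hfin
      exact ⟨c, hc, claimA hfin⟩
    · exact claimB
  simp only [hG1def] at hmain
  refine ⟨hmain, hmain.2, fun hne' => ?_⟩
  by_contra h'
  exact hne' (hmain.1 (lt_top_iff_ne_top.2 h'))
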